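/- For all integers n and k with 3 ≤ k < n, there exists a cyclic difference sequence for k-permutations of ZMod n; that is, setting M = (n-1)(n-2)⋯(n-k+1), there exists a function U : ZMod M → ZMod n such that the map sending each position i ∈ ZMod M to the window (U(i), U(i+1), …, U(i+k-2)) is a bijection onto the set of difference patterns of injective k-tuples over ZMod n. -/

import Mathlib

/-- Partial sums of a `(k-1)`-tuple `d` over `ZMod n`: the `t`-th partial sum is
`d 0 + d 1 + ⋯ + d (t-1)` (so the `0`-th partial sum is `0`). -/
def partialSums (n k : ℕ) (d : Fin (k - 1) → ZMod n) : Fin k → ZMod n :=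
  fun t => ∑ j : Fin (k - 1), if (j : ℕ) < (t : ℕ) then d j else 0

/-- `d` is a difference pattern of some injective `k`-tuple over `ZMod n` iff its `k`
partial sums `0, d₁, d₁+d₂, …, d₁+⋯+d_{k-1}` are pairwise distinct. -/
def IsDiffPattern (n k : ℕ) (d : Fin (k - 1) → ZMod n) : Prop :=
  Function.Injective (partialSums n k d)

open Equiv Function

namespace DiffSeqAux

open Equiv Function

variable {n k : ℕ}

lemma psum_at_zero (d : Fin (k-1) → ZMod n) (h0 : 0 < k) :
    partialSums n k d ⟨0, h0⟩ = 0 := by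
  unfold partialSums
  exact Finset.sum_eq_zero fun j _ => by simp

lemma psum_succ (d : Fin (k-1) → ZMod n) {j : ℕ} (hj : j < k - 1) (hj' : j + 1 < k)
    (hjk : j < k) :
    partialSums n k d ⟨j+1, hj'⟩ = partialSums n k d ⟨j, hjk⟩ + d ⟨j, hj⟩ := by
  unfold partialSums
  have key : ∀ i : Fin (k-1), (if (i:ℕ) < j+1 then d i else 0)
      = (if (i:ℕ) < j then d i else 0) + (if i = ⟨j,hj⟩ then d i else 0) := by
    intro i
    by_cases h1 : (i:ℕ) < j
    · rw [if_pos (by omega : (i:ℕ) < j+1), if_pos h1,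
        if_neg (by simp [Fin.ext_iff]; omega), add_zero]
    · by_cases h2 : (i:ℕ) = j
      · rw [if_pos (by omega), if_neg h1, if_pos (by simp [Fin.ext_iff, h2]), zero_add]
      · rw [if_neg (by omega), if_neg h1, if_neg (by simp [Fin.ext_iff]; omega), add_zero]
  simp only [Finset.sum_congr rfl (fun i _ => key i), Finset.sum_add_distrib]
  congr 1
  simp

def diffOf (x : Fin k → ZMod n) : Fin (k-1) → ZMod n :=
  fun j => x ⟨j.1+1, by have := j.2; omega⟩ - x ⟨j.1, by have := j.2; omega⟩

lemma psum_diffOf (hk0 : 0 < k) (x : Fin k → ZMod n) :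
    ∀ m (hm : m < k), partialSums n k (diffOf x) ⟨m, hm⟩ = x ⟨m, hm⟩ - x ⟨0, hk0⟩ := by
  intro m
  induction m with
  | zero => intro hm; rw [psum_at_zero _ hk0]; simp
  | succ m ih =>
    intro hm
    have hm' : m < k := by omega
    have hj : m < k - 1 := by omega
    rw [psum_succ _ hj hm hm', ih hm']
    show _ = _
    simp only [diffOf]
    abel

lemma diffOf_psum (d : Fin (k-1) → ZMod n) : diffOf (partialSums n k d) = d := by
  funext j
  have hj := j.2
  show partialSums n k d ⟨j.1+1, by omega⟩ - partialSums n k d ⟨j.1, by omega⟩ = d j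
  rw [psum_succ d j.2 (by omega) (by omega)]
  simp

lemma isDiffPattern_diffOf (hk0 : 0 < k) (x : Fin k → ZMod n) (hx : Injective x) :
    IsDiffPattern n k (diffOf x) := by
  have h : partialSums n k (diffOf x) = fun t => x t - x ⟨0, hk0⟩ := by
    funext t
    have := psum_diffOf hk0 x t.1 t.2
    rwa [Fin.eta] at this
  unfold IsDiffPattern
  rw [h]
  intro a b hab
  exact hx (by have := sub_left_injective (G := ZMod n) hab; exact this)

instance (n k : ℕ) [NeZero n] : DecidablePred (IsDiffPattern n k) := fun _ =>
  decidable_of_iff _ (Iff.rfl (a := Function.Injective _))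

abbrev Pat (n k : ℕ) := {d : Fin (k-1) → ZMod n // IsDiffPattern n k d}

def patEquivTuple (hk0 : 0 < k) :
    Pat n k ≃ {x : Fin k → ZMod n // Injective x ∧ x ⟨0, hk0⟩ = 0} where
  toFun d := ⟨partialSums n k d.1, d.2, psum_at_zero d.1 hk0⟩
  invFun x := ⟨diffOf x.1, isDiffPattern_diffOf hk0 x.1 x.2.1⟩
  left_inv d := Subtype.ext (diffOf_psum d.1)
  right_inv x := Subtype.ext (funext fun t => by
    show partialSums n k (diffOf x.1) t = x.1 t
    have h := psum_diffOf hk0 x.1 t.1 t.2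
    rw [Fin.eta] at h
    rw [h, x.2.2, sub_zero])

def tupleEquivEmb (hk0 : 0 < k) :
    {x : Fin k → ZMod n // Injective x ∧ x ⟨0, hk0⟩ = 0}
      ≃ (Fin (k-1) ↪ {z : ZMod n // z ≠ 0}) where
  toFun x := ⟨fun j => ⟨x.1 ⟨j.1+1, by have := j.2; omega⟩, fun h => by
      have h2 := x.2.1 (h.trans x.2.2.symm)
      simp [Fin.ext_iff] at h2⟩, by
    intro a b hab
    have h2 := x.2.1 (congrArg Subtype.val hab)
    simp [Fin.ext_iff] at h2
    exact Fin.ext h2⟩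
  invFun e := ⟨fun t => if h : t.1 = 0 then 0 else (e ⟨t.1 - 1, by have := t.2; omega⟩).1, by
    constructor
    · intro a b hab
      by_cases ha : a.1 = 0 <;> by_cases hb : b.1 = 0 <;> simp [ha, hb] at hab ⊢
      · exact Fin.ext (ha.trans hb.symm)
      · exact absurd hab.symm (e ⟨b.1 - 1, by have := b.2; omega⟩).2
      · exact absurd hab (e ⟨a.1 - 1, by have := a.2; omega⟩).2
      · have := e.injective (Subtype.ext hab)
        simp [Fin.ext_iff] at this
        exact Fin.ext (by omega)
    · simp⟩
  left_inv x := Subtype.ext (funext fun t => by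
    by_cases ht : t.1 = 0
    · simp only [ht, dif_pos]
      rw [show t = ⟨0, hk0⟩ from Fin.ext ht]
      exact x.2.2.symm
    · simp only [ht, dif_neg, not_false_iff]
      exact congrArg x.1 (Fin.ext (by simp only []; omega)))
  right_inv e := by
    apply Function.Embedding.ext
    intro j
    apply Subtype.ext
    show (if h : (j.1+1) = 0 then (0:ZMod n) else _) = _
    rw [dif_neg (by omega)]
    exact congrArg (fun z => (e z).1) (Fin.ext (by simp))

lemma card_pat (hk : 3 ≤ k) (hkn : k < n) [NeZero n] :
    Fintype.card (Pat n k) = (n-1).descFactorial (k-1) := by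
  rw [Fintype.card_congr ((patEquivTuple (by omega : 0 < k)).trans (tupleEquivEmb _)),
    Fintype.card_embedding_eq, Fintype.card_fin, Fintype.card_subtype_compl,
    ZMod.card, Fintype.card_subtype_eq]

section Euler
variable {E V : Type*} [Fintype E] [DecidableEq E]

omit [Fintype E] in
lemma pow_swap_eq (π : Perm E) (a b z : E) :
    ∀ j : ℕ, (∀ i, i < j → (π^(i+1)) z ≠ a ∧ (π^(i+1)) z ≠ b) →
      ((π * Equiv.swap a b)^j) (π z) = (π^(j+1)) z := by
  intro j
  induction j with
  | zero => simp
  | succ j ih =>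
    intro h
    rw [pow_succ', Perm.mul_apply, ih (fun i hi => h i (by omega))]
    have hz := h j (by omega)
    rw [Perm.mul_apply, Equiv.swap_apply_of_ne_of_ne hz.1 hz.2]
    rw [← Perm.mul_apply, ← pow_succ']

lemma exists_min_period (π : Perm E) (z : E) :
    ∃ m : ℕ, (0 < m ∧ (π^m) z = z) ∧ ∀ i, 0 < i → i < m → (π^i) z ≠ z := by
  have hex : ∃ m, 0 < m ∧ (π^m) z = z :=
    ⟨orderOf π, orderOf_pos π, by rw [pow_orderOf_eq_one]; rfl⟩
  refine ⟨Nat.find hex, Nat.find_spec hex, fun i hi him hiz => ?_⟩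
  exact Nat.find_min hex him ⟨hi, hiz⟩

omit [Fintype E] [DecidableEq E] in
lemma pow_mod_cycle (π : Perm E) (z : E) (m : ℕ) (hm : 0 < m) (hmz : (π^m) z = z) :
    ∀ j, (π^j) z = (π^(j % m)) z := by
  intro j
  induction j using Nat.strong_induction_on with
  | _ j ih =>
    by_cases hj : j < m
    · rw [Nat.mod_eq_of_lt hj]
    · push_neg at hj
      have h1 : j = (j - m) + m := by omega
      have h2 : (π^j) z = (π^(j-m)) z := by
        conv_lhs => rw [h1]
        rw [pow_add, Perm.mul_apply, hmz]
      have h3 : j % m = (j - m) % m := Nat.mod_eq_sub_mod hj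
      calc (π^j) z = (π^(j-m)) z := h2
        _ = (π^((j-m) % m)) z := ih (j-m) (by omega)
        _ = (π^(j % m)) z := by rw [← h3]

lemma sameCycle_swap_left {π : Perm E} {a b : E} (hab : ¬ π.SameCycle a b) :
    (π * Equiv.swap a b).SameCycle a b := by
  obtain ⟨m, ⟨hm0, hmz⟩, hmin⟩ := exists_min_period π b
  have key : ((π * Equiv.swap a b)^(m-1)) (π b) = b := by
    rw [pow_swap_eq π a b b (m-1) ?_]
    · rw [show m - 1 + 1 = m by omega, hmz]
    · intro i hi
      constructor
      · intro hcon
        exact hab (Perm.SameCycle.symm ⟨(i+1 : ℕ), by rw [zpow_natCast, hcon]⟩)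
      · exact hmin (i+1) (by omega) (by omega)
  have h1 : (π * Equiv.swap a b) a = π b := by
    rw [Perm.mul_apply, Equiv.swap_apply_left]
  have h2 : (π * Equiv.swap a b).SameCycle (π b) b := ⟨(m-1 : ℕ), by rw [zpow_natCast, key]⟩
  exact Perm.SameCycle.trans ⟨1, by rw [zpow_one, h1]⟩ h2

lemma sameCycle_swap_mono {π : Perm E} {a b x : E} (hab : ¬ π.SameCycle a b)
    (h : π.SameCycle a x) : (π * Equiv.swap a b).SameCycle a x := by
  obtain ⟨m, ⟨hm0, hmz⟩, hmin⟩ := exists_min_period π a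
  obtain ⟨j, hjlt, hj⟩ := Perm.SameCycle.exists_pow_eq' h
  -- reduce j mod m
  have hjm : (π^(j % m)) a = x := by rw [← pow_mod_cycle π a m hm0 hmz, hj]
  set j' := j % m with hj'
  have hj'lt : j' < m := Nat.mod_lt _ hm0
  rcases Nat.eq_zero_or_pos j' with h0 | hpos
  · rw [h0] at hjm
    have hax : a = x := by simpa using hjm
    rw [← hax]
  · -- x = π^{j'} a = (π')^{j'-1} (π a), and π' b = π a
    have key : ((π * Equiv.swap a b)^(j'-1)) (π a) = x := by
      rw [pow_swap_eq π a b a (j'-1) ?_]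
      · rw [show j' - 1 + 1 = j' by omega, hjm]
      · intro i hi
        refine ⟨hmin (i+1) (by omega) (by omega), fun hcon => ?_⟩
        exact hab ⟨(i+1 : ℕ), by rw [zpow_natCast, hcon]⟩
    have hb : (π * Equiv.swap a b) b = π a := by
      rw [Perm.mul_apply, Equiv.swap_apply_right]
    have h2 : (π * Equiv.swap a b).SameCycle b x := by
      refine ⟨(j' : ℕ), ?_⟩
      rw [zpow_natCast, show j' = (j'-1) + 1 by omega, pow_succ, Perm.mul_apply, hb, key]
    exact Perm.SameCycle.trans (sameCycle_swap_left hab) h2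

lemma exists_crossing {α : Type*} {r : α → α → Prop} {x y : α}
    (h : Relation.ReflTransGen r x y) (P : α → Prop) (hx : P x) (hy : ¬ P y) :
    ∃ u, P u ∧ ∃ w, ¬ P w ∧ r u w := by
  induction h with
  | refl => exact absurd hx hy
  | @tail b c h1 h2 ih =>
    by_cases hb : P b
    · exact ⟨b, hb, c, hy, h2⟩
    · exact ih hb

lemma euler_cycle {E V : Type*} [Fintype E] [DecidableEq E] (s t : E → V)
    (π₀ : Perm E) (hπ₀ : ∀ e, t e = s (π₀ e))
    (hconn : ∀ e f : E, Relation.ReflTransGen (fun a b => t a = s b) e f)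
    (e₀ : E) (M : ℕ) (hM : Fintype.card E = M) (hM2 : 2 ≤ M) :
    ∃ σ : ZMod M ≃ E, ∀ i : ZMod M, t (σ i) = s (σ (i + 1)) := by
  classical
  -- maximize the size of the cycle of e₀ among compatible permutations
  set Compat : Perm E → Prop := fun π => ∀ e, t e = s (π e) with hCompat
  set S : Finset (Perm E) := Finset.univ.filter Compat with hS
  have hSne : S.Nonempty := ⟨π₀, by simp [hS, hCompat, hπ₀]⟩
  set μ : Perm E → ℕ := fun π => (Finset.univ.filter (fun x => π.SameCycle e₀ x)).card with hμ
  obtain ⟨π, hπS, hmax⟩ := S.exists_max_image μ hSne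
  have hcompat : Compat π := by
    have := hπS
    simp only [hS, Finset.mem_filter] at this
    exact this.2
  -- the cycle of e₀ under π is everything
  have full : ∀ x, π.SameCycle e₀ x := by
    by_contra hcon
    push_neg at hcon
    obtain ⟨b₀, hb₀⟩ := hcon
    obtain ⟨u, hu, w, hw, huw⟩ :=
      exists_crossing (hconn e₀ b₀) (fun x => π.SameCycle e₀ x) (Perm.SameCycle.refl _ _) hb₀
    set b : E := π⁻¹ w with hbdef
    have htb : t u = t b := by
      rw [hcompat b, show π b = w by simp [hbdef]]
      exact huw
    have hbC : ¬ π.SameCycle e₀ b := fun hc => hw (by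
      have : π.SameCycle e₀ (π b) := (Perm.sameCycle_apply_right).2 hc
      simpa [hbdef] using this)
    have hub : ¬ π.SameCycle u b := fun hc => hbC (Perm.SameCycle.trans hu hc)
    set π' : Perm E := π * Equiv.swap u b with hπ'def
    have hπ'compat : Compat π' := by
      intro e
      rcases eq_or_ne e u with heu | heu
      · rw [heu]
        have h1 : π' u = π b := by simp [hπ'def, Perm.mul_apply]
        rw [h1, ← hcompat b]
        exact htb
      · rcases eq_or_ne e b with heb | heb
        · rw [heb]
          have h1 : π' b = π u := by simp [hπ'def, Perm.mul_apply]
          rw [h1, ← hcompat u]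
          exact htb.symm
        · have h1 : π' e = π e := by
            simp [hπ'def, Perm.mul_apply, Equiv.swap_apply_of_ne_of_ne heu heb]
          rw [h1]
          exact hcompat e
    have hπ'S : π' ∈ S := by simp [hS, hCompat, hπ'compat]; exact hπ'compat
    -- cycle class of e₀ grows
    have hue : π.SameCycle u e₀ := hu.symm
    have grow : ∀ x, π.SameCycle e₀ x → π'.SameCycle e₀ x := by
      intro x hx
      have h1 : π'.SameCycle u x := sameCycle_swap_mono hub (hue.trans hx)
      have h2 : π'.SameCycle u e₀ := sameCycle_swap_mono hub hue
      exact h2.symm.trans h1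
    have hb' : π'.SameCycle e₀ b := by
      have h2 : π'.SameCycle u e₀ := sameCycle_swap_mono hub hue
      exact h2.symm.trans (sameCycle_swap_left hub)
    have hlt : μ π < μ π' := by
      apply Finset.card_lt_card
      constructor
      · intro x hx
        simp only [Finset.mem_filter, Finset.mem_univ, true_and] at hx ⊢
        exact grow x hx
      · intro hsub
        have := hsub (by simp only [Finset.mem_filter, Finset.mem_univ, true_and]; exact hb')
        simp only [Finset.mem_filter, Finset.mem_univ, true_and] at this
        exact hbC this
    exact absurd (hmax π' hπ'S) (by omega)
  -- now π is a single cycle through all of E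
  obtain ⟨m, ⟨hm0, hmz⟩, hmin⟩ := exists_min_period π e₀
  have hinj : ∀ i j, i < m → j < m → (π^i) e₀ = (π^j) e₀ → i = j := by
    have key : ∀ i j, i ≤ j → j < m → (π^i) e₀ = (π^j) e₀ → i = j := by
      intro i j hij hjm hco
      by_contra hne
      have h1 : (π^(j-i)) ((π^i) e₀) = (π^i) ((π^(j-i)) e₀) := by
        rw [← Perm.mul_apply, ← Perm.mul_apply, ← pow_add, ← pow_add, Nat.add_comm]
      have h2 : (π^i) ((π^(j-i)) e₀) = (π^i) e₀ := by
        rw [← h1, ← Perm.mul_apply, ← pow_add, Nat.sub_add_cancel hij, ← hco]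
      have h3 : (π^(j-i)) e₀ = e₀ := (Equiv.injective (π^i)) h2
      exact hmin (j-i) (by omega) (by omega) h3
    intro i j him hjm hco
    rcases le_total i j with h | h
    · exact key i j h hjm hco
    · exact (key j i h him hco.symm).symm
  have hsurj : ∀ x, ∃ i < m, (π^i) e₀ = x := by
    intro x
    obtain ⟨j, _, hj⟩ := Perm.SameCycle.exists_pow_eq' (full x)
    exact ⟨j % m, Nat.mod_lt _ hm0, by rw [← pow_mod_cycle π e₀ m hm0 hmz, hj]⟩
  have hmM : m = M := by
    rw [← hM]
    have hbij : Function.Bijective (fun i : Fin m => (π^(i:ℕ)) e₀) := by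
      constructor
      · intro i j hij
        exact Fin.ext (hinj i j i.2 j.2 hij)
      · intro x
        obtain ⟨i, him, hi⟩ := hsurj x
        exact ⟨⟨i, him⟩, hi⟩
    rw [← Fintype.card_fin m]
    exact Fintype.card_of_bijective hbij
  subst hmM
  haveI : NeZero m := ⟨by omega⟩
  set σ0 : ZMod m → E := fun i => (π^(i.val)) e₀ with hσ0
  have hbij : Function.Bijective σ0 := by
    constructor
    · intro i j hij
      have := hinj i.val j.val (ZMod.val_lt i) (ZMod.val_lt j) hij
      exact ZMod.val_injective _ this
    · intro x
      obtain ⟨i, him, hi⟩ := hsurj x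
      refine ⟨(i : ZMod m), ?_⟩
      rw [hσ0]
      simp only [ZMod.val_natCast]
      rw [Nat.mod_eq_of_lt him, hi]
  refine ⟨Equiv.ofBijective σ0 hbij, fun i => ?_⟩
  have hstep : (Equiv.ofBijective σ0 hbij) (i + 1) = π ((Equiv.ofBijective σ0 hbij) i) := by
    show σ0 (i+1) = π (σ0 i)
    rw [hσ0]
    simp only
    have h1 : (i + 1 : ZMod m) = ((i.val + 1 : ℕ) : ZMod m) := by
      push_cast
      rw [ZMod.natCast_val, ZMod.cast_id]
    rw [h1, ZMod.val_natCast, ← pow_mod_cycle π e₀ m hm0 hmz, pow_succ', Perm.mul_apply]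
  rw [hstep]
  exact hcompat _

end Euler
lemma fin_mk_eq_mk {N a b : ℕ} (ha : a < N) (hb : b < N) (h : a = b) :
    (⟨a, ha⟩ : Fin N) = ⟨b, hb⟩ := by subst h; rfl

lemma eq_fin_mk {N a : ℕ} (t : Fin N) (h : a < N) (hv : t.1 = a) : t = ⟨a, h⟩ := Fin.ext hv

def rotD (d : Fin (k-1) → ZMod n) : Fin (k-1) → ZMod n :=
  fun j => if h : j.1 + 1 < k - 1 then d ⟨j.1+1, h⟩ else -(∑ i, d i)

lemma sum_eq_psum_last (hk2 : 2 ≤ k) (d : Fin (k-1) → ZMod n) :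
    ∑ i, d i = partialSums n k d ⟨k-1, by omega⟩ := by
  unfold partialSums
  exact Finset.sum_congr rfl fun i _ => by rw [if_pos i.2]

lemma psum_rotD (hk2 : 2 ≤ k) (d : Fin (k-1) → ZMod n) :
    ∀ m (hm : m < k - 1), partialSums n k (rotD d) ⟨m, by omega⟩
      = partialSums n k d ⟨m+1, by omega⟩ - d ⟨0, by omega⟩ := by
  intro m
  induction m with
  | zero =>
    intro hm
    rw [psum_at_zero _ (by omega), psum_succ d (by omega) (by omega) (by omega),
      psum_at_zero _ (by omega)]
    abel
  | succ m ih =>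
    intro hm
    rw [psum_succ (rotD d) (j := m) (by omega) (by omega) (by omega), ih (by omega)]
    have hr : rotD d ⟨m, by omega⟩ = d ⟨m+1, by omega⟩ :=
      dif_pos (show m + 1 < k - 1 by omega)
    rw [hr, psum_succ d (j := m+1) (by omega) (by omega) (by omega)]
    abel

lemma psum_rotD_last (hk2 : 2 ≤ k) (d : Fin (k-1) → ZMod n) :
    partialSums n k (rotD d) ⟨k-1, by omega⟩ = - d ⟨0, by omega⟩ := by
  have h1 : (⟨k-1, by omega⟩ : Fin k) = ⟨(k-2)+1, by omega⟩ := fin_mk_eq_mk _ _ (by omega)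
  rw [h1, psum_succ (rotD d) (j := k-2) (by omega) (by omega) (by omega)]
  have h2 : rotD d ⟨k-2, by omega⟩ = -(∑ i, d i) :=
    dif_neg (show ¬(k - 2 + 1 < k - 1) by omega)
  rw [h2, sum_eq_psum_last hk2 d, psum_rotD hk2 d (k-2) (by omega)]
  have h3 : (⟨k-2+1, by omega⟩ : Fin k) = ⟨k-1, by omega⟩ := fin_mk_eq_mk _ _ (by omega)
  rw [h3]
  abel

lemma isDiffPattern_rotD (hk2 : 2 ≤ k) {d : Fin (k-1) → ZMod n}
    (hd : IsDiffPattern n k d) : IsDiffPattern n k (rotD d) := by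
  intro a b hab
  have S0 : partialSums n k d ⟨0, by omega⟩ = 0 := psum_at_zero _ (by omega)
  have key : ∀ t : Fin k, partialSums n k (rotD d) t
      = partialSums n k d (if h : t.1 < k - 1 then ⟨t.1+1, by omega⟩ else ⟨0, by omega⟩)
        - d ⟨0, by omega⟩ := by
    intro t
    by_cases h : t.1 < k - 1
    · rw [dif_pos h]
      have := psum_rotD hk2 d t.1 h
      rw [show (⟨t.1, by omega⟩ : Fin k) = t from Fin.ext rfl] at this
      rw [this]
    · rw [dif_neg h]
      have ht : t = ⟨k-1, by omega⟩ := eq_fin_mk t (by omega) (by have := t.2; omega)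
      rw [ht, psum_rotD_last hk2 d, S0]
      abel
  rw [key a, key b] at hab
  have hab2 := sub_left_injective hab
  have := hd hab2
  by_cases ha : a.1 < k - 1 <;> by_cases hb : b.1 < k - 1 <;>
    simp only [ha, hb, dif_pos, dif_neg, not_false_iff, Fin.mk.injEq] at this
  · exact Fin.ext (by omega)
  · omega
  · omega
  · exact Fin.ext (by have := a.2; have := b.2; omega)

lemma rotD_injective (hk : 3 ≤ k) : Injective (rotD (n := n) (k := k)) := by
  intro d d' h
  have hsum : ∑ i, d i = ∑ i, d' i := by
    have h1 := congrFun h ⟨k-2, by omega⟩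
    simp only [rotD, dif_neg (show ¬(k-2+1 < k-1) by omega)] at h1
    exact neg_injective h1
  have htail : ∀ i : Fin (k-1), i.1 ≠ 0 → d i = d' i := by
    intro i hi
    have h1 := congrFun h ⟨i.1-1, by have := i.2; omega⟩
    simp only [rotD, dif_pos (show (i.1-1)+1 < k-1 by have := i.2; omega)] at h1
    have h2 : (⟨i.1-1+1, by have := i.2; omega⟩ : Fin (k-1)) = i :=
      (eq_fin_mk i (by have := i.2; omega) (by omega)).symm
    rwa [h2] at h1
  have h0 : d ⟨0, by omega⟩ = d' ⟨0, by omega⟩ := by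
    have e1 := Finset.add_sum_erase Finset.univ d (Finset.mem_univ (⟨0, by omega⟩ : Fin (k-1)))
    have e2 := Finset.add_sum_erase Finset.univ d' (Finset.mem_univ (⟨0, by omega⟩ : Fin (k-1)))
    have e3 : ∑ i ∈ Finset.univ.erase (⟨0, by omega⟩ : Fin (k-1)), d i
        = ∑ i ∈ Finset.univ.erase (⟨0, by omega⟩ : Fin (k-1)), d' i :=
      Finset.sum_congr rfl fun i hi => htail i (by
        have := Finset.ne_of_mem_erase hi
        simpa [Fin.ext_iff] using this)
    have := e1.trans (hsum.trans e2.symm)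
    rw [e3] at this
    exact add_right_cancel this
  funext i
  rcases eq_or_ne i.1 0 with hi | hi
  · rw [show i = ⟨0, by omega⟩ from Fin.ext hi]
    exact h0
  · exact htail i hi

def sV (e : Pat n k) : Fin (k-2) → ZMod n :=
  fun j => e.1 ⟨j.1, by have := j.2; omega⟩
def tV (e : Pat n k) : Fin (k-2) → ZMod n :=
  fun j => e.1 ⟨j.1+1, by have := j.2; omega⟩

noncomputable def rotP (hk : 3 ≤ k) [NeZero n] : Perm (Pat n k) :=
  Equiv.ofBijective (fun e => ⟨rotD e.1, isDiffPattern_rotD (by omega) e.2⟩)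
    ((Finite.injective_iff_bijective).1 fun a b hab =>
      Subtype.ext (rotD_injective hk (congrArg Subtype.val hab)))

lemma rotP_compat (hk : 3 ≤ k) [NeZero n] (e : Pat n k) : tV e = sV (rotP hk e) := by
  funext j
  have hj : (j.1 : ℕ) < k - 2 := j.2
  have hr : rotD e.1 ⟨j.1, by omega⟩ = e.1 ⟨j.1+1, by omega⟩ :=
    dif_pos (show (j.1:ℕ) + 1 < k - 1 by omega)
  show e.1 ⟨j.1+1, _⟩ = rotD e.1 ⟨j.1, _⟩
  rw [hr]

section Conn
variable {k n' : ℕ}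

def blockCycle (n' k : ℕ) (hkb : k - 1 < n' + 1) : Perm (Fin (n'+1)) :=
  Fin.cycleRange ⟨k-1, hkb⟩

def IsGen (n' k : ℕ) (hkb : k - 1 < n' + 1) (g : Perm (Fin (n'+1))) : Prop :=
  g = blockCycle n' k hkb ∨
    ∃ m : Fin (n'+1), k ≤ m.1 ∧ g = Equiv.swap 0 m * blockCycle n' k hkb

def StepP (n' k : ℕ) (hkb : k - 1 < n'+1) (p q : Fin (n'+1) ≃ ZMod (n'+1)) : Prop :=
  ∃ g, IsGen n' k hkb g ∧ q = g.trans p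

lemma blockCycle_apply_lt (hkb : k - 1 < n' + 1) {i : ℕ} (hi : i < k - 1) (hin : i < n'+1)
    (hin' : i + 1 < n'+1) :
    blockCycle n' k hkb ⟨i, hin⟩ = ⟨i+1, hin'⟩ := by
  have h1 : (⟨i, hin⟩ : Fin (n'+1)) < ⟨k-1, hkb⟩ := by
    rw [Fin.lt_def]; exact hi
  rw [blockCycle, Fin.cycleRange_of_lt h1]
  apply Fin.ext
  rw [Fin.val_add_one_of_lt (by rw [Fin.lt_def]; exact Nat.lt_of_succ_lt_succ (by exact hin'))]

lemma blockCycle_apply_gt (hkb : k - 1 < n' + 1) {m : Fin (n'+1)} (hm : k - 1 < m.1) :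
    blockCycle n' k hkb m = m := by
  rw [blockCycle, Fin.cycleRange_of_gt (by rw [Fin.lt_def]; exact hm)]

lemma isGen_apply (hkb : k - 1 < n'+1) {g : Perm (Fin (n'+1))} (hg : IsGen n' k hkb g)
    (hk3 : 3 ≤ k) (hkn : k < n'+1) {i : ℕ} (hi : i < k - 1) :
    g ⟨i, by omega⟩ = ⟨i+1, by omega⟩ := by
  have hc := blockCycle_apply_lt hkb hi (by omega) (by omega)
  rcases hg with rfl | ⟨m, hm, rfl⟩
  · exact hc
  · rw [Perm.mul_apply, hc, Equiv.swap_apply_of_ne_of_ne]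
    · intro hcon
      have := congrArg Fin.val hcon
      simp [Fin.val_zero] at this
    · intro hcon
      have := congrArg Fin.val hcon
      simp at this
      omega

def reachSub (n' k : ℕ) (hkb : k - 1 < n'+1) : Subgroup (Perm (Fin (n'+1))) where
  carrier := {g | ∀ p : Fin (n'+1) ≃ ZMod (n'+1),
    Relation.ReflTransGen (StepP n' k hkb) p (g.trans p)}
  one_mem' := fun p => by
    have h : (1 : Perm (Fin (n'+1))).trans p = p := Equiv.ext fun _ => rfl
    rw [h]
  mul_mem' := @fun a b ha hb p => by
    have h : (a * b).trans p = b.trans (a.trans p) := Equiv.ext fun _ => rfl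
    rw [h]
    exact (ha p).trans (hb (a.trans p))
  inv_mem' := @fun a ha => by
    have hpow : ∀ j : ℕ, ∀ p : Fin (n'+1) ≃ ZMod (n'+1),
        Relation.ReflTransGen (StepP n' k hkb) p ((a^j).trans p) := by
      intro j
      induction j with
      | zero =>
        intro p
        have h : ((a:Perm (Fin (n'+1)))^0).trans p = p := Equiv.ext fun _ => rfl
        rw [h]
      | succ j ih =>
        intro p
        have h : (a^(j+1)).trans p = (a^j).trans (a.trans p) := Equiv.ext fun i => by
          show p ((a^(j+1)) i) = p (a ((a^j) i))
          rw [pow_succ', Perm.mul_apply]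
        rw [h]
        exact (ha p).trans (ih (a.trans p))
    intro p
    have ho : 0 < orderOf a := orderOf_pos a
    have hinv : a⁻¹ = a^(orderOf a - 1) := by
      have h1 : a * a^(orderOf a - 1) = 1 := by
        rw [← pow_succ', Nat.sub_add_cancel ho, pow_orderOf_eq_one]
      exact inv_eq_of_mul_eq_one_right h1
    rw [hinv]
    exact hpow _ p

lemma isGen_mem (hkb : k - 1 < n'+1) {g : Perm (Fin (n'+1))} (hg : IsGen n' k hkb g) :
    g ∈ reachSub n' k hkb :=
  fun p => Relation.ReflTransGen.single ⟨g, hg, rfl⟩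

lemma reachSub_eq_top (hk3 : 3 ≤ k) (hkn : k < n'+1) (hkb : k - 1 < n'+1) :
    reachSub n' k hkb = ⊤ := by
  set H := reachSub n' k hkb with hH
  have hc : blockCycle n' k hkb ∈ H := isGen_mem hkb (Or.inl rfl)
  have hsw0 : ∀ m : Fin (n'+1), k ≤ m.1 → Equiv.swap 0 m ∈ H := by
    intro m hm
    have h1 : Equiv.swap 0 m * blockCycle n' k hkb ∈ H := isGen_mem hkb (Or.inr ⟨m, hm, rfl⟩)
    have h2 := H.mul_mem h1 (H.inv_mem hc)
    rwa [mul_inv_cancel_right] at h2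
  have hcpow : ∀ (i : ℕ) (hi : i ≤ k - 1), ((blockCycle n' k hkb)^i) 0 = ⟨i, by omega⟩ := by
    intro i
    induction i with
    | zero => intro _; rfl
    | succ i ih =>
      intro hi
      rw [pow_succ', Perm.mul_apply, ih (by omega)]
      exact blockCycle_apply_lt hkb (by omega) (by omega) (by omega)
  have hcfix : ∀ (m : Fin (n'+1)), k ≤ m.1 → ∀ i : ℕ, ((blockCycle n' k hkb)^i) m = m := by
    intro m hm i
    induction i with
    | zero => rfl
    | succ i ih =>
      rw [pow_succ', Perm.mul_apply, ih, blockCycle_apply_gt hkb (by omega)]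
  have hswim : ∀ (a m : Fin (n'+1)), a.1 < k → k ≤ m.1 → Equiv.swap a m ∈ H := by
    intro a m ha hm
    have h0 : ((blockCycle n' k hkb)^a.1) 0 = a := by
      rw [hcpow a.1 (by omega)]
    have h1 : ((blockCycle n' k hkb)^a.1) m = m := hcfix m hm a.1
    have h2 : Equiv.swap a m
        = (blockCycle n' k hkb)^a.1 * Equiv.swap 0 m * ((blockCycle n' k hkb)^a.1)⁻¹ := by
      rw [← Equiv.swap_apply_apply, h0, h1]
    rw [h2]
    exact H.mul_mem (H.mul_mem (H.pow_mem hc a.1) (hsw0 m hm)) (H.inv_mem (H.pow_mem hc a.1))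
  have hswap : ∀ a b : Fin (n'+1), Equiv.swap a b ∈ H := by
    intro a b
    rcases eq_or_ne a b with rfl | hab
    · rw [Equiv.swap_self]
      exact H.one_mem
    set μ : Fin (n'+1) := ⟨k, hkn⟩ with hμ
    have hμk : k ≤ μ.1 := le_refl k
    by_cases ha : a.1 < k <;> by_cases hb : b.1 < k
    · -- both small
      have hbne_a : b ≠ a := hab.symm
      have hbne_μ : b ≠ μ := fun hcon => by rw [hcon] at hb; omega
      have h2 : Equiv.swap a b
          = Equiv.swap a μ * Equiv.swap μ b * (Equiv.swap a μ)⁻¹ := by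
        have := Equiv.swap_apply_apply (Equiv.swap a μ) μ b
        rw [Equiv.swap_apply_right, Equiv.swap_apply_of_ne_of_ne hbne_a hbne_μ] at this
        exact this
      rw [h2]
      have hswaμ := hswim a μ ha hμk
      have hswμb : Equiv.swap μ b ∈ H := by rw [Equiv.swap_comm]; exact hswim b μ hb hμk
      exact H.mul_mem (H.mul_mem hswaμ hswμb) (H.inv_mem hswaμ)
    · exact hswim a b ha (by omega)
    · rw [Equiv.swap_comm]
      exact hswim b a hb (by omega)
    · -- both large
      have hbne_0 : b ≠ 0 := fun hcon => by
        exact hb (by rw [hcon, Fin.val_zero]; omega)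
      have h2 : Equiv.swap a b = Equiv.swap 0 a * Equiv.swap 0 b * (Equiv.swap 0 a)⁻¹ := by
        have := Equiv.swap_apply_apply (Equiv.swap 0 a) 0 b
        rw [Equiv.swap_apply_left, Equiv.swap_apply_of_ne_of_ne hbne_0 hab.symm] at this
        exact this
      rw [h2]
      have hsw0a := hswim 0 a (by simp; omega) (by omega)
      have hsw0b := hswim 0 b (by simp; omega) (by omega)
      exact H.mul_mem (H.mul_mem hsw0a hsw0b) (H.inv_mem hsw0a)
  rw [eq_top_iff, ← Equiv.Perm.closure_isSwap]
  rw [Subgroup.closure_le]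
  rintro g ⟨x, y, hxy, rfl⟩
  exact hswap x y

lemma reach_all (hk3 : 3 ≤ k) (hkn : k < n'+1) (hkb : k - 1 < n'+1)
    (p q : Fin (n'+1) ≃ ZMod (n'+1)) :
    Relation.ReflTransGen (StepP n' k hkb) p q := by
  have hg : (q.trans p.symm : Perm (Fin (n'+1))) ∈ reachSub n' k hkb := by
    rw [reachSub_eq_top hk3 hkn hkb]
    exact Subgroup.mem_top _
  have h := hg p
  have heq : (q.trans p.symm).trans p = q := Equiv.ext fun i => by
    simp [Equiv.trans_apply]
  rwa [heq] at h

end Conn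
lemma exists_extension {N : ℕ} [NeZero N] (hkN : k ≤ N) (x : Fin k → ZMod N)
    (hx : Injective x) :
    ∃ p : Fin N ≃ ZMod N, ∀ i : Fin k, p ⟨i.1, by have := i.2; omega⟩ = x i := by
  classical
  have cardA : Fintype.card {i : Fin N // i.1 < k} = k := by
    have e : {i : Fin N // i.1 < k} ≃ Fin k :=
      ⟨fun s => ⟨s.1.1, s.2⟩, fun i => ⟨⟨i.1, by have := i.2; omega⟩, i.2⟩,
        fun s => Subtype.ext (Fin.ext rfl), fun i => Fin.ext rfl⟩
    rw [Fintype.card_congr e, Fintype.card_fin]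
  have cardB : Fintype.card {z : ZMod N // z ∈ Set.range x} = k := by
    have e : {z : ZMod N // z ∈ Set.range x} ≃ Fin k :=
      (Equiv.ofInjective x hx).symm
    rw [Fintype.card_congr e, Fintype.card_fin]
  have hcompl : Fintype.card {i : Fin N // ¬ i.1 < k}
      = Fintype.card {z : ZMod N // ¬ z ∈ Set.range x} := by
    rw [Fintype.card_subtype_compl, Fintype.card_subtype_compl, cardA, cardB,
      Fintype.card_fin, ZMod.card]
  obtain ⟨ψ⟩ : Nonempty ({i : Fin N // ¬ i.1 < k} ≃ {z : ZMod N // ¬ z ∈ Set.range x}) :=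
    ⟨Fintype.equivOfCardEq hcompl⟩
  set f : Fin N → ZMod N := fun i => if h : i.1 < k then x ⟨i.1, h⟩ else (ψ ⟨i, h⟩).1 with hf
  have hinj : Injective f := by
    intro i j hij
    rw [hf] at hij
    simp only at hij
    by_cases hi : i.1 < k <;> by_cases hj : j.1 < k
    · rw [dif_pos hi, dif_pos hj] at hij
      have h1 := hx hij
      rw [Fin.mk.injEq] at h1
      exact Fin.ext h1
    · rw [dif_pos hi, dif_neg hj] at hij
      exact absurd ⟨⟨i.1, hi⟩, hij⟩ (ψ ⟨j, hj⟩).2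
    · rw [dif_neg hi, dif_pos hj] at hij
      exact absurd ⟨⟨j.1, hj⟩, hij.symm⟩ (ψ ⟨i, hi⟩).2
    · rw [dif_neg hi, dif_neg hj] at hij
      have h1 : ψ ⟨i, hi⟩ = ψ ⟨j, hj⟩ := Subtype.ext hij
      have h2 := ψ.injective h1
      exact congrArg Subtype.val h2
  have hbij : Bijective f := by
    rw [Fintype.bijective_iff_injective_and_card]
    exact ⟨hinj, by rw [Fintype.card_fin, ZMod.card]⟩
  refine ⟨Equiv.ofBijective f hbij, fun i => ?_⟩
  show f ⟨i.1, _⟩ = x i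
  have h1 : f ⟨i.1, by have := i.2; omega⟩ = x ⟨i.1, i.2⟩ := dif_pos i.2
  rw [h1, Fin.eta]

def tupOf (hkn : k < n'+1) (p : Fin (n'+1) ≃ ZMod (n'+1)) : Fin k → ZMod (n'+1) :=
  fun i => p ⟨i.1, by have := i.2; omega⟩

lemma tupOf_injective (hkn : k < n'+1) (p : Fin (n'+1) ≃ ZMod (n'+1)) :
    Injective (tupOf hkn p) := by
  intro a b hab
  have := p.injective hab
  have h2 := congrArg Fin.val this
  exact Fin.ext h2

def patOf (hk3 : 3 ≤ k) (hkn : k < n'+1) (p : Fin (n'+1) ≃ ZMod (n'+1)) : Pat (n'+1) k :=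
  ⟨diffOf (tupOf hkn p), isDiffPattern_diffOf (by omega) _ (tupOf_injective hkn p)⟩

lemma step_pat (hk3 : 3 ≤ k) (hkn : k < n'+1) (hkb : k - 1 < n'+1)
    {p q : Fin (n'+1) ≃ ZMod (n'+1)} (h : StepP n' k hkb p q) :
    tV (patOf hk3 hkn p) = sV (patOf hk3 hkn q) := by
  obtain ⟨g, hg, rfl⟩ := h
  funext j
  have hj : (j.1:ℕ) < k - 2 := j.2
  have e1 : ∀ (a : ℕ) (ha : a < k - 1) (ha2 : a < k),
      tupOf hkn (g.trans p) ⟨a, ha2⟩ = p ⟨a+1, by omega⟩ := by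
    intro a ha ha2
    show p (g ⟨a, _⟩) = _
    rw [isGen_apply hkb hg hk3 hkn ha]
  show diffOf (tupOf hkn p) ⟨j.1+1, by omega⟩
      = diffOf (tupOf hkn (g.trans p)) ⟨j.1, by omega⟩
  show tupOf hkn p ⟨j.1+1+1, by omega⟩ - tupOf hkn p ⟨j.1+1, by omega⟩
      = tupOf hkn (g.trans p) ⟨j.1+1, by omega⟩ - tupOf hkn (g.trans p) ⟨j.1, by omega⟩
  rw [e1 (j.1+1) (by omega) (by omega), e1 j.1 (by omega) (by omega)]
  rfl

lemma pat_conn (hk3 : 3 ≤ k) (hkn : k < n'+1) (e f : Pat (n'+1) k) :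
    Relation.ReflTransGen (fun a b : Pat (n'+1) k => tV a = sV b) e f := by
  have hkb : k - 1 < n'+1 := by omega
  have hsurj : ∀ e : Pat (n'+1) k, ∃ p, patOf hk3 hkn p = e := by
    intro e
    obtain ⟨p, hp⟩ := exists_extension (by omega) (partialSums (n'+1) k e.1) e.2
    refine ⟨p, Subtype.ext ?_⟩
    show diffOf (tupOf hkn p) = e.1
    have htup : tupOf hkn p = partialSums (n'+1) k e.1 := funext fun i => by
      have h := hp i
      rw [← h]
      rfl
    rw [htup, diffOf_psum]
  obtain ⟨p, hp⟩ := hsurj e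
  obtain ⟨q, hq⟩ := hsurj f
  have hreach := reach_all hk3 hkn hkb p q
  have hlift : Relation.ReflTransGen (fun a b : Pat (n'+1) k => tV a = sV b)
      (patOf hk3 hkn p) (patOf hk3 hkn q) := Relation.ReflTransGen.lift
    (p := fun a b : Pat (n'+1) k => tV a = sV b) (patOf hk3 hkn)
    (fun a b hab => step_pat hk3 hkn hkb hab) p q hreach
  rwa [hp, hq] at hlift


section Assembly
variable {n k : ℕ}

lemma psum_const (c : ZMod n) :
    ∀ m (hm : m < k), partialSums n k (fun _ => c) ⟨m, hm⟩ = (m : ℕ) * c := by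
  intro m
  induction m with
  | zero => intro hm; rw [psum_at_zero _ (by omega)]; simp
  | succ m ih =>
    intro hm
    rw [psum_succ _ (j := m) (by omega) (by omega) (by omega), ih (by omega)]
    push_cast
    ring

lemma isDiffPattern_const_one (hk : 3 ≤ k) (hkn : k < n) :
    IsDiffPattern n k (fun _ => (1 : ZMod n)) := by
  intro a b hab
  rw [show a = ⟨a.1, a.2⟩ from rfl, show b = ⟨b.1, b.2⟩ from rfl] at hab
  rw [psum_const 1 a.1 a.2, psum_const 1 b.1 b.2, mul_one, mul_one] at hab
  have h1 := congrArg ZMod.val hab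
  rw [ZMod.val_cast_of_lt (by omega), ZMod.val_cast_of_lt (by omega)] at h1
  exact Fin.ext h1

lemma isDiffPattern_const_negone (hk : 3 ≤ k) (hkn : k < n) :
    IsDiffPattern n k (fun _ => (-1 : ZMod n)) := by
  intro a b hab
  rw [show a = ⟨a.1, a.2⟩ from rfl, show b = ⟨b.1, b.2⟩ from rfl] at hab
  rw [psum_const (-1) a.1 a.2, psum_const (-1) b.1 b.2] at hab
  have h0 : ((a.1 : ℕ) : ZMod n) = ((b.1 : ℕ) : ZMod n) := by
    have hneg : -((a.1:ℕ) : ZMod n) = -((b.1:ℕ) : ZMod n) := by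
      rw [← mul_neg_one (((a.1:ℕ)) : ZMod n), ← mul_neg_one (((b.1:ℕ)) : ZMod n)]
      exact hab
    exact neg_injective hneg
  have h1 := congrArg ZMod.val h0
  rw [ZMod.val_cast_of_lt (by omega), ZMod.val_cast_of_lt (by omega)] at h1
  exact Fin.ext h1

lemma pat_conn' (hk3 : 3 ≤ k) (hkn : k < n) (e f : Pat n k) :
    Relation.ReflTransGen (fun a b : Pat n k => tV a = sV b) e f := by
  obtain ⟨n', rfl⟩ : ∃ n', n = n'+1 := ⟨n-1, by omega⟩
  exact pat_conn hk3 hkn e f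

end Assembly
end DiffSeqAux

open DiffSeqAux

/-- for all `3 ≤ k < n` there exists a cyclic difference sequence for
`k`-permutations of `ZMod n`: a function `U : ZMod M → ZMod n`, with
`M = (n-1)(n-2)⋯(n-k+1)`, whose position-to-window map is a bijection onto the set of
difference patterns of injective `k`-tuples over `ZMod n`. -/
theorem exists_difference_sequence (n k : ℕ) (hk : 3 ≤ k) (hkn : k < n) :
    ∃ U : ZMod (Nat.descFactorial (n - 1) (k - 1)) → ZMod n,
      (∀ i : ZMod (Nat.descFactorial (n - 1) (k - 1)),
        IsDiffPattern n k
          (fun j : Fin (k - 1) =>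
            U (i + (j.val : ZMod (Nat.descFactorial (n - 1) (k - 1)))))) ∧
      (∀ d : Fin (k - 1) → ZMod n, IsDiffPattern n k d →
        ∃! i : ZMod (Nat.descFactorial (n - 1) (k - 1)),
          (fun j : Fin (k - 1) =>
            U (i + (j.val : ZMod (Nat.descFactorial (n - 1) (k - 1))))) = d) := by
  classical
  haveI : NeZero n := ⟨by omega⟩
  set M := Nat.descFactorial (n - 1) (k - 1) with hMdef
  have hcard : Fintype.card (Pat n k) = M := card_pat hk hkn
  have h1 : IsDiffPattern n k (fun _ => (1:ZMod n)) := isDiffPattern_const_one hk hkn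
  have h2 : IsDiffPattern n k (fun _ => (-1:ZMod n)) := isDiffPattern_const_negone hk hkn
  have hM2 : 2 ≤ M := by
    rw [← hcard]
    have hne : (⟨fun _ => (1:ZMod n), h1⟩ : Pat n k) ≠ ⟨fun _ => (-1:ZMod n), h2⟩ := by
      intro hcon
      have hcon2 := congrFun (congrArg Subtype.val hcon) ⟨0, by omega⟩
      simp only at hcon2
      have h3 : ((2:ℕ) : ZMod n) = 0 := by
        push_cast
        linear_combination hcon2
      rw [ZMod.natCast_eq_zero_iff] at h3
      have := Nat.le_of_dvd (by norm_num) h3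
      omega
    have : Nontrivial (Pat n k) := ⟨⟨_, _, hne⟩⟩
    exact Fintype.one_lt_card
  obtain ⟨σ, hσ⟩ := euler_cycle sV tV (rotP hk) (rotP_compat hk) (pat_conn' hk hkn)
      (⟨fun _ => (1:ZMod n), h1⟩ : Pat n k) M hcard hM2
  set U : ZMod M → ZMod n := fun i => (σ i).1 ⟨0, by omega⟩ with hU
  have key : ∀ (j : ℕ) (hj : j < k-1) (i : ZMod M),
      U (i + (j : ZMod M)) = (σ i).1 ⟨j, hj⟩ := by
    intro j
    induction j with
    | zero =>
      intro hj i
      show (σ (i + ((0:ℕ) : ZMod M))).1 ⟨0, by omega⟩ = _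
      rw [Nat.cast_zero, add_zero]
    | succ j ih =>
      intro hj i
      have hcast : (((j+1 : ℕ)) : ZMod M) = (j : ZMod M) + 1 := by push_cast; ring
      have hidx : i + ((j+1 : ℕ) : ZMod M) = (i + 1) + (j : ZMod M) := by rw [hcast]; ring
      rw [hidx, ih (by omega) (i+1)]
      have hstep := congrFun (hσ i) ⟨j, show j < k-2 by omega⟩
      exact hstep.symm
  have hwin : ∀ i : ZMod M, (fun j : Fin (k-1) => U (i + (j.1 : ZMod M))) = (σ i).1 := by
    intro i
    funext j
    exact key j.1 j.2 i
  refine ⟨U, fun i => ?_, fun d hd => ?_⟩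
  · rw [hwin i]
    exact (σ i).2
  · refine ⟨σ.symm ⟨d, hd⟩, ?_, ?_⟩
    · show (fun j : Fin (k-1) => U (σ.symm ⟨d,hd⟩ + (j.1 : ZMod M))) = d
      rw [hwin]
      exact congrArg Subtype.val (Equiv.apply_symm_apply σ ⟨d, hd⟩)
    · intro i' hi'
      rw [hwin i'] at hi'
      have hσi : σ i' = ⟨d, hd⟩ := Subtype.ext hi'
      rw [← hσi, Equiv.symm_apply_apply]
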